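/- Let p, q be probability densities with q > 0 a.e. Then the functional V(D) = ∫ p·log D + q·log(1−D) dμ over measurable D : X → (0,1) satisfies sup_D V(D) = 2·JS(p‖q) − 2·log 2 = KL(p ‖ (p+q)/2) + KL(q ‖ (p+q)/2) − 2·log 2. -/

import Mathlib

open MeasureTheory Real Filter

-- pointwise optimality of D* = a/(a+b)
lemma gan_pt_ineq {a b t : ℝ} (ha : 0 ≤ a) (hb : 0 < b) (ht0 : 0 < t) (ht1 : t < 1) :
    a * Real.log t + b * Real.log (1 - t) ≤
      a * Real.log (a / (a + b)) + b * Real.log (b / (a + b)) := by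
  rcases ha.eq_or_lt with h | h
  · rw [← h]
    have h1 : (1:ℝ) - t ≤ 1 := by linarith
    have : Real.log (1 - t) ≤ 0 := Real.log_nonpos (by linarith) h1
    have hbb : b / (0 + b) = 1 := by rw [zero_add]; exact div_self (ne_of_gt hb)
    simp [hbb, div_self (ne_of_gt hb)]
    nlinarith [this, hb]
  · have hab : 0 < a + b := by linarith
    have h1t : 0 < 1 - t := by linarith
    have e1 : Real.log t - Real.log (a / (a + b)) = Real.log (t * (a + b) / a) := by
      rw [Real.log_div (ne_of_gt h) (ne_of_gt hab),
          Real.log_div (by positivity) (ne_of_gt h), Real.log_mul (ne_of_gt ht0) (ne_of_gt hab)]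
      ring
    have e2 : Real.log (1 - t) - Real.log (b / (a + b)) = Real.log ((1 - t) * (a + b) / b) := by
      rw [Real.log_div (ne_of_gt hb) (ne_of_gt hab),
          Real.log_div (by positivity) (ne_of_gt hb), Real.log_mul (ne_of_gt h1t) (ne_of_gt hab)]
      ring
    have l1 : Real.log (t * (a + b) / a) ≤ t * (a + b) / a - 1 :=
      Real.log_le_sub_one_of_pos (by positivity)
    have l2 : Real.log ((1 - t) * (a + b) / b) ≤ (1 - t) * (a + b) / b - 1 :=
      Real.log_le_sub_one_of_pos (by positivity)
    have m1 : a * Real.log (t * (a + b) / a) ≤ t * (a + b) - a := by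
      have := mul_le_mul_of_nonneg_left l1 ha
      calc a * Real.log (t * (a+b)/a) ≤ a * (t * (a+b)/a - 1) := this
        _ = t * (a + b) - a := by field_simp
    have m2 : b * Real.log ((1 - t) * (a + b) / b) ≤ (1 - t) * (a + b) - b := by
      have := mul_le_mul_of_nonneg_left l2 hb.le
      calc b * Real.log ((1-t) * (a+b)/b) ≤ b * ((1-t) * (a+b)/b - 1) := this
        _ = (1 - t) * (a + b) - b := by field_simp
    nlinarith [e1, e2, m1, m2]

-- lower bound for the eps-perturbed integrand
lemma gan_pt_lower {p q ε : ℝ} (hp : 0 ≤ p) (hq : 0 < q) (hε0 : 0 < ε) (hε1 : ε ≤ 1) :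
    (p * Real.log (p / (p + q)) + q * Real.log (q / (p + q))) - (p + q) * Real.log 2
      ≤ p * Real.log ((p + ε * q) / (p + (1 + ε) * q))
        + q * Real.log (q / (p + (1 + ε) * q)) := by
  have hpq : 0 < p + q := by linarith
  have hden : 0 < p + (1 + ε) * q := by nlinarith
  have t2 : q * Real.log (q / (p + q)) - q * Real.log 2 ≤ q * Real.log (q / (p + (1 + ε) * q)) := by
    have hle : q / (2 * (p + q)) ≤ q / (p + (1 + ε) * q) := by
      apply div_le_div_of_nonneg_left hq.le hden
      nlinarith
    have hlog := Real.log_le_log (by positivity) hle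
    have e : Real.log (q / (2 * (p + q))) = Real.log (q / (p + q)) - Real.log 2 := by
      rw [Real.log_div (ne_of_gt hq) (by positivity),
          Real.log_div (ne_of_gt hq) (ne_of_gt hpq), Real.log_mul (by norm_num) (ne_of_gt hpq)]
      ring
    nlinarith [mul_le_mul_of_nonneg_left hlog hq.le]
  have t1 : p * Real.log (p / (p + q)) - p * Real.log 2
      ≤ p * Real.log ((p + ε * q) / (p + (1 + ε) * q)) := by
    rcases hp.eq_or_lt with h | h
    · simp [← h]
    · have hle : p / (2 * (p + q)) ≤ (p + ε * q) / (p + (1 + ε) * q) := by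
        apply div_le_div₀ (by positivity) (by nlinarith) hden (by nlinarith)
      have hlog := Real.log_le_log (by positivity) hle
      have e : Real.log (p / (2 * (p + q))) = Real.log (p / (p + q)) - Real.log 2 := by
        rw [Real.log_div (ne_of_gt h) (by positivity),
            Real.log_div (ne_of_gt h) (ne_of_gt hpq), Real.log_mul (by norm_num) (ne_of_gt hpq)]
        ring
      nlinarith [mul_le_mul_of_nonneg_left hlog h.le]
  nlinarith [t1, t2]

-- split: p * log (p / ((p+q)/2)) = p * log (p/(p+q)) + p * log 2   (for p ≥ 0, p+q > 0)
lemma gan_log_split {p q : ℝ} (hp : 0 ≤ p) (hpq : 0 < p + q) :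
    p * Real.log (p / ((p + q) / 2)) = p * Real.log (p / (p + q)) + p * Real.log 2 := by
  rcases hp.eq_or_lt with h | h
  · simp [← h]
  · rw [Real.log_div (ne_of_gt h) (by positivity),
        Real.log_div (ne_of_gt h) (ne_of_gt hpq),
        Real.log_div (ne_of_gt hpq) (by norm_num)]
    ring

/-- The classical GAN value-function identity: the supremum of
`V(D) = ∫ p·log D + q·log(1−D)` over measurable `D : X → (0,1)` equals
`2·JS(p‖q) − 2·log 2 = KL(p‖(p+q)/2) + KL(q‖(p+q)/2) − 2·log 2`. -/
theorem gan_value_function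
    {X : Type*} [MeasurableSpace X] (μ : Measure X)
    (p q : X → ℝ) (hpm : Measurable p) (hqm : Measurable q)
    (hp0 : ∀ x, 0 ≤ p x) (hq0 : ∀ᵐ x ∂μ, 0 < q x)
    (hp1 : ∫ x, p x ∂μ = 1) (hq1 : ∫ x, q x ∂μ = 1)
    (hIp : Integrable (fun x => p x * Real.log (p x / ((p x + q x) / 2))) μ)
    (hIq : Integrable (fun x => q x * Real.log (q x / ((p x + q x) / 2))) μ) :
    IsLUB {v : ℝ | ∃ D : X → ℝ, Measurable D ∧ (∀ x, D x ∈ Set.Ioo (0 : ℝ) 1) ∧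
        Integrable (fun x => p x * Real.log (D x) + q x * Real.log (1 - D x)) μ ∧
        v = ∫ x, (p x * Real.log (D x) + q x * Real.log (1 - D x)) ∂μ}
      ((∫ x, p x * Real.log (p x / ((p x + q x) / 2)) ∂μ) +
       (∫ x, q x * Real.log (q x / ((p x + q x) / 2)) ∂μ) - 2 * Real.log 2) := by
  have hp_int : Integrable p μ := by
    by_contra h; rw [integral_undef h] at hp1; norm_num at hp1
  have hq_int : Integrable q μ := by
    by_contra h; rw [integral_undef h] at hq1; norm_num at hq1
  set fP : X → ℝ := fun x => p x * Real.log (p x / (p x + q x)) with hfP_def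
  set fQ : X → ℝ := fun x => q x * Real.log (q x / (p x + q x)) with hfQ_def
  have hPae : (fun x => p x * Real.log (p x / ((p x + q x) / 2))) =ᵐ[μ]
      fun x => fP x + p x * Real.log 2 := by
    filter_upwards [hq0] with x hq
    exact gan_log_split (hp0 x) (by linarith [hp0 x])
  have hQae : (fun x => q x * Real.log (q x / ((p x + q x) / 2))) =ᵐ[μ]
      fun x => fQ x + q x * Real.log 2 := by
    filter_upwards [hq0] with x hq
    have := gan_log_split (p := q x) (q := p x) hq.le (by linarith [hp0 x])
    simpa [hfQ_def, add_comm (q x) (p x)] using this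
  have hfP_int : Integrable fP μ := by
    refine (hIp.sub (hp_int.mul_const (Real.log 2))).congr ?_
    filter_upwards [hPae] with x hx
    simp [hx]
  have hfQ_int : Integrable fQ μ := by
    refine (hIq.sub (hq_int.mul_const (Real.log 2))).congr ?_
    filter_upwards [hQae] with x hx
    simp [hx]
  have hf_int : Integrable (fun x => fP x + fQ x) μ := hfP_int.add hfQ_int
  have hT : (∫ x, p x * Real.log (p x / ((p x + q x) / 2)) ∂μ) +
       (∫ x, q x * Real.log (q x / ((p x + q x) / 2)) ∂μ) - 2 * Real.log 2
      = ∫ x, (fP x + fQ x) ∂μ := by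
    rw [integral_congr_ae hPae, integral_congr_ae hQae,
        integral_add hfP_int (hp_int.mul_const _), integral_add hfQ_int (hq_int.mul_const _),
        integral_add hfP_int hfQ_int, integral_mul_const, integral_mul_const, hp1, hq1]
    ring
  rw [hT]
  constructor
  · rintro v ⟨D, hDm, hD01, hDint, rfl⟩
    refine integral_mono_ae hDint hf_int ?_
    filter_upwards [hq0] with x hq
    exact gan_pt_ineq (hp0 x) hq (hD01 x).1 (hD01 x).2
  · rintro b hb
    set e : ℕ → ℝ := fun n => 1 / (n + 1) with he_def
    have he_pos : ∀ n, 0 < e n := fun n => by positivity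
    have he_le : ∀ n, e n ≤ 1 := fun n => by
      rw [he_def]; rw [div_le_one (by positivity)]; linarith
    have he0 : Tendsto e atTop (nhds 0) := tendsto_one_div_add_atTop_nhds_zero_nat
    set D : ℕ → X → ℝ := fun n x =>
      if 0 < q x then (p x + e n * q x) / (p x + (1 + e n) * q x) else 1 / 2 with hD_def
    have hden : ∀ n x, 0 < q x → 0 < p x + (1 + e n) * q x := fun n x hq => by
      nlinarith [hp0 x, he_pos n]
    have hDx : ∀ n x, 0 < q x → D n x = (p x + e n * q x) / (p x + (1 + e n) * q x) := by
      intro n x hq; simp only [hD_def]; rw [if_pos hq]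
    have hD01 : ∀ n x, D n x ∈ Set.Ioo (0 : ℝ) 1 := by
      intro n x
      by_cases hq : 0 < q x
      · rw [hDx n x hq]
        constructor
        · exact div_pos (by nlinarith [hp0 x, he_pos n]) (hden n x hq)
        · rw [div_lt_one (hden n x hq)]; nlinarith [he_pos n]
      · have : D n x = 1 / 2 := by simp only [hD_def]; rw [if_neg hq]
        rw [this]; norm_num
    have hDm : ∀ n, Measurable (D n) := fun n => by
      apply Measurable.ite (measurableSet_lt measurable_const hqm)
      · exact (hpm.add (hqm.const_mul _)).div (hpm.add (hqm.const_mul _))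
      · exact measurable_const
    set F : ℕ → X → ℝ := fun n x => p x * Real.log (D n x) + q x * Real.log (1 - D n x)
      with hF_def
    have hFm : ∀ n, Measurable (F n) := fun n =>
      (hpm.mul ((hDm n).log)) |>.add (hqm.mul ((measurable_const.sub (hDm n)).log))
    have hF_eq : ∀ n x, 0 < q x → F n x =
        p x * Real.log ((p x + e n * q x) / (p x + (1 + e n) * q x)) +
        q x * Real.log (q x / (p x + (1 + e n) * q x)) := by
      intro n x hq
      have hd := hden n x hq
      have h1D : 1 - D n x = q x / (p x + (1 + e n) * q x) := by
        rw [hDx n x hq]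
        rw [eq_div_iff hd.ne', sub_mul, div_mul_cancel₀ _ hd.ne']
        ring
      show p x * Real.log (D n x) + q x * Real.log (1 - D n x) = _
      rw [h1D, hDx n x hq]
    set bound : X → ℝ := fun x => |fP x + fQ x| + (p x + q x) * Real.log 2 with hbound_def
    have hbound_int : Integrable bound μ :=
      hf_int.abs.add ((hp_int.add hq_int).mul_const _)
    have h_bound : ∀ n, ∀ᵐ x ∂μ, ‖F n x‖ ≤ bound x := by
      intro n
      filter_upwards [hq0] with x hq
      have hup : F n x ≤ fP x + fQ x :=
        gan_pt_ineq (hp0 x) hq (hD01 n x).1 (hD01 n x).2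
      have hlo : (fP x + fQ x) - (p x + q x) * Real.log 2 ≤ F n x := by
        rw [hF_eq n x hq]
        exact gan_pt_lower (hp0 x) hq (he_pos n) (he_le n)
      have hnn : 0 ≤ (p x + q x) * Real.log 2 := by
        have := Real.log_nonneg (by norm_num : (1:ℝ) ≤ 2)
        nlinarith [hp0 x, hq.le]
      rw [Real.norm_eq_abs, abs_le]
      constructor
      · have := neg_abs_le (fP x + fQ x); rw [hbound_def]; simp only; linarith
      · have := le_abs_self (fP x + fQ x); rw [hbound_def]; simp only; linarith
    have h_lim : ∀ᵐ x ∂μ, Tendsto (fun n => F n x) atTop (nhds (fP x + fQ x)) := by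
      filter_upwards [hq0] with x hq
      have hpq : 0 < p x + q x := by linarith [hp0 x]
      have h2 : Tendsto (fun n => p x + (1 + e n) * q x) atTop (nhds (p x + q x)) := by
        have : Tendsto (fun n => p x + (1 + e n) * q x) atTop
            (nhds (p x + (1 + 0) * q x)) :=
          tendsto_const_nhds.add ((tendsto_const_nhds.add he0).mul_const _)
        simpa using this
      have hterm2 : Tendsto (fun n => q x * Real.log (q x / (p x + (1 + e n) * q x)))
          atTop (nhds (fQ x)) := by
        have hne : q x / (p x + q x) ≠ 0 := ne_of_gt (div_pos hq hpq)
        exact ((tendsto_const_nhds.div h2 (ne_of_gt hpq)).log hne).const_mul _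
      have hterm1 : Tendsto (fun n => p x * Real.log ((p x + e n * q x) / (p x + (1 + e n) * q x)))
          atTop (nhds (fP x)) := by
        rcases (hp0 x).eq_or_lt with h | h
        · simp only [hfP_def, ← h]
          simp
        · have h1 : Tendsto (fun n => p x + e n * q x) atTop (nhds (p x)) := by
            have : Tendsto (fun n => p x + e n * q x) atTop (nhds (p x + 0 * q x)) :=
              tendsto_const_nhds.add (he0.mul_const _)
            simpa using this
          have hne : p x / (p x + q x) ≠ 0 := ne_of_gt (div_pos h hpq)
          exact ((h1.div h2 (ne_of_gt hpq)).log hne).const_mul _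
      have : Tendsto (fun n => p x * Real.log ((p x + e n * q x) / (p x + (1 + e n) * q x)) +
          q x * Real.log (q x / (p x + (1 + e n) * q x))) atTop (nhds (fP x + fQ x)) :=
        hterm1.add hterm2
      refine this.congr fun n => (hF_eq n x hq).symm
    have hF_int : ∀ n, Integrable (F n) μ := fun n =>
      Integrable.mono' hbound_int (hFm n).aestronglyMeasurable (h_bound n)
    have htend : Tendsto (fun n => ∫ x, F n x ∂μ) atTop (nhds (∫ x, (fP x + fQ x) ∂μ)) :=
      tendsto_integral_of_dominated_convergence bound
        (fun n => (hFm n).aestronglyMeasurable) hbound_int h_bound h_lim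
    refine le_of_tendsto htend (Eventually.of_forall fun n => hb ?_)
    exact ⟨D n, hDm n, fun x => hD01 n x, hF_int n, rfl⟩
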